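/- arXiv:math/0602100 — 2 statements merged into one kernel-verified Lean document; each statement's English description precedes it below -/
import Mathlib

section
/- For the subshift X(M), the number of n-periodic points is p_n(X(M)) = (2M+1)^n + (M+2)^n − ∑_{i=0}^{n/2} binom(n,i) 2^i (M^i + M^{n−i}) + binom(n, n/2)(2M)^{n/2} if n is even, and p_n(X(M)) = (2M+1)^n + (M+2)^n − ∑_{i=0}^{(n−1)/2} binom(n,i) 2^i (M^i + M^{n−i}) if n is odd. (Note: in the odd case the subtracted sum appears with coefficient as stated, matching the identity p_n = p(G'_1) + p(G''_1) − (∑_{i=0}^{⌊n/2⌋} binom(n,i)(2M)^i) − (∑_{i=0}^{⌊n/2⌋} binom(n,i) 2^i M^{n−i}) + p_n(E^∞).) -/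
open PowerSeries

namespace XShift

/-- The alphabet `Σ₁ = {λ, ξ, ρ₁,…,ρ_M, η₁,…,η_M}` of the subshift `X(M)`. -/
inductive Letter1 (M : ℕ) : Type where
  | lam
  | xi
  | rho (i : Fin M)
  | eta (i : Fin M)
  deriving DecidableEq

/-- Elements of the monoid `M₁(M)`: `none` is zero; a nonzero element is a reduced
word consisting of right letters (`(false, i)` for `ρᵢ`, `(true, i)` for `ηᵢ`)
followed by left letters (`false` for `λ`, `true` for `ξ`, stored in reverse order).
`some ([], [])` is the identity. -/
abbrev El1 (M : ℕ) : Type := Option (List (Bool × Fin M) × List Bool)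

/-- The identity of `M₁(M)`. -/
def one1 (M : ℕ) : El1 M := some ([], [])

/-- Multiplication by a generator, implementing `λρᵢ = 1`, `ξηᵢ = 1`, `ληᵢ = 0`,
`ξρᵢ = 0`. -/
def step1 (M : ℕ) : El1 M → Letter1 M → El1 M
  | none, _ => none
  | some (r, l), .lam => some (r, false :: l)
  | some (r, l), .xi => some (r, true :: l)
  | some (r, l), .rho i =>
      match l with
      | [] => some (r ++ [(false, i)], [])
      | b :: t => if b = false then some (r, t) else none
  | some (r, l), .eta i =>
      match l with
      | [] => some (r ++ [(true, i)], [])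
      | b :: t => if b = true then some (r, t) else none

/-- `red1 w` is the image of a word `w` in the monoid `M₁(M)`. -/
def red1 (M : ℕ) (w : List (Letter1 M)) : El1 M := w.foldl (step1 M) (one1 M)

/-- The code `E` of `X(M)`: words `λ v ρᵢ` or `ξ v ηᵢ` with `red v = 1`. -/
def codeE1 (M : ℕ) (w : List (Letter1 M)) : Prop :=
  ∃ (i : Fin M) (v : List (Letter1 M)),
    (w = Letter1.lam :: (v ++ [Letter1.rho i]) ∨ w = Letter1.xi :: (v ++ [Letter1.eta i]))
      ∧ red1 M v = one1 M

/-- The number of length-`n` code words of `X(M)`. -/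
noncomputable def e1 (M n : ℕ) : ℕ :=
  Nat.card {w : Fin n → Letter1 M // codeE1 M (List.ofFn w)}

/-- The generating function of the code `E` of `X(M)`. -/
noncomputable def fE1 (M : ℕ) : PowerSeries ℚ := PowerSeries.mk fun n => (e1 M n : ℚ)

/-- Membership in the subshift `X(M)`: all finite subwords have nonzero reduction. -/
def inXShift (M : ℕ) (x : ℤ → Letter1 M) : Prop :=
  ∀ (i : ℤ) (m : ℕ), red1 M (List.ofFn fun k : Fin m => x (i + k)) ≠ none

/-- The number of `n`-periodic points of `X(M)`. -/
noncomputable def pX (M n : ℕ) : ℕ :=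
  Nat.card {x : ℤ → Letter1 M // inXShift M x ∧ ∀ k : ℤ, x (k + n) = x k}

/-- Cancel a (reversed) left-letter word against a right-letter word, computing the
multiplier `red(α₋α₊)` of a block with reduction `(r, l)`. -/
def cancel (M : ℕ) : List Bool → List (Bool × Fin M) →
    Option (List Bool × List (Bool × Fin M))
  | [], r => some ([], r)
  | c :: lt, [] => some (c :: lt, [])
  | c :: lt, (b, _) :: rt => if c = b then cancel M lt rt else none

/-- The multiplier of the length-`n` defining block `x₀x₁⋯x_{n−1}` of a periodic
point `x`, as an element of `M₁(M)` given by the remaining (left, right) letters. -/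
def multiplier (M n : ℕ) (x : ℤ → Letter1 M) : Option (List Bool × List (Bool × Fin M)) :=
  match red1 M (List.ofFn fun k : Fin n => x (k : ℤ)) with
  | none => none
  | some (r, l) => cancel M l r

/-- A positive-or-neutral multiplier: no left letters remain after cancellation. -/
def PosMult (M n : ℕ) (x : ℤ → Letter1 M) : Prop :=
  ∃ r', multiplier M n x = some ([], r')

/-- A negative-or-neutral multiplier: no right letters remain after cancellation. -/
def NegMult (M n : ℕ) (x : ℤ → Letter1 M) : Prop :=
  ∃ l', multiplier M n x = some (l', [])

/-- `p_n⁺(X(M))`: the number of `n`-periodic points of `X(M)` whose defining block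
has a positive or neutral multiplier. -/
noncomputable def pXpos (M n : ℕ) : ℕ :=
  Nat.card {x : ℤ → Letter1 M //
    inXShift M x ∧ (∀ k : ℤ, x (k + n) = x k) ∧ PosMult M n x}

/-- `p_n⁻(X(M))`: the number of `n`-periodic points of `X(M)` whose defining block
has a negative or neutral multiplier. -/
noncomputable def pXneg (M n : ℕ) : ℕ :=
  Nat.card {x : ℤ → Letter1 M //
    inXShift M x ∧ (∀ k : ℤ, x (k + n) = x k) ∧ NegMult M n x}



variable {M : ℕ}

/-! ### Basic letter functions -/

def isOpenL : Letter1 M → Bool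
  | .lam => true | .xi => true | _ => false

def typL : Letter1 M → Bool
  | .lam => false | .xi => true | .rho _ => false | .eta _ => true

def ht : Letter1 M → ℤ := fun a => if isOpenL a then 1 else -1

/-! ### The monoid multiplication -/

def mul1 (M : ℕ) : El1 M → El1 M → El1 M
  | none, _ => none
  | _, none => none
  | some (r1, l1), some (r2, l2) =>
      (cancel M l1 r2).map fun p => (r1 ++ p.2, l2 ++ p.1)

@[simp] lemma mul1_none_right (a : El1 M) : mul1 M a none = none := by
  cases a with
  | none => rfl
  | some p => obtain ⟨r, l⟩ := p; rfl

@[simp] lemma mul1_none_left (a : El1 M) : mul1 M none a = none := by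
  cases a with
  | none => rfl
  | some p => obtain ⟨r, l⟩ := p; rfl

@[simp] lemma step1_none (c : Letter1 M) : step1 M none c = none := by cases c <;> rfl

lemma red1_snoc (w : List (Letter1 M)) (c : Letter1 M) :
    red1 M (w ++ [c]) = step1 M (red1 M w) c := by
  rw [red1, List.foldl_append]; rfl

@[simp] lemma cancel_nil_right (l : List Bool) : cancel M l [] = some (l, []) := by
  cases l <;> rfl

@[simp] lemma mul1_one_right (a : El1 M) : mul1 M a (one1 M) = a := by
  cases a with
  | none => rfl
  | some p => obtain ⟨r, l⟩ := p; simp [mul1, one1]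

@[simp] lemma mul1_one_left (a : El1 M) : mul1 M (one1 M) a = a := by
  cases a with
  | none => rfl
  | some p => obtain ⟨r, l⟩ := p; simp [mul1, one1, cancel]

lemma cancel_empty_or (l : List Bool) (r : List (Bool × Fin M)) :
    ∀ l' r', cancel M l r = some (l', r') → l' = [] ∨ r' = [] := by
  induction l generalizing r with
  | nil => intro l' r' h; simp [cancel] at h; left; exact h.1
  | cons c lt ih =>
    intro l' r' h
    cases r with
    | nil => simp [cancel] at h; right; exact h.2
    | cons x rt =>
      obtain ⟨b, i⟩ := x
      simp only [cancel] at h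
      by_cases hcb : c = b
      · rw [if_pos hcb] at h; exact ih rt l' r' h
      · rw [if_neg hcb] at h; exact absurd h (by simp)

lemma cancel_snoc (l : List Bool) (r : List (Bool × Fin M)) (x : Bool × Fin M) :
    cancel M l (r ++ [x]) =
      match cancel M l r with
      | none => none
      | some ([], r') => some ([], r' ++ [x])
      | some (b :: lt, _) => if b = x.1 then some (lt, []) else none := by
  induction l generalizing r with
  | nil => simp [cancel]
  | cons c lt ih =>
    cases r with
    | nil =>
      obtain ⟨b, i⟩ := x
      simp only [cancel, List.nil_append]
      by_cases hcb : c = b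
      · subst hcb; simp [cancel_nil_right]
      · simp [hcb]
    | cons y rt =>
      obtain ⟨b, i⟩ := y
      simp only [cancel, List.cons_append]
      by_cases hcb : c = b
      · rw [if_pos hcb, if_pos hcb]; exact ih rt
      · rw [if_neg hcb, if_neg hcb]

lemma step1_mul1 (a b : El1 M) (c : Letter1 M) :
    step1 M (mul1 M a b) c = mul1 M a (step1 M b c) := by
  cases a with
  | none => simp
  | some pa =>
    obtain ⟨r1, l1⟩ := pa
    cases b with
    | none => simp
    | some pb =>
      obtain ⟨r2, l2⟩ := pb
      have hco := cancel_empty_or (M := M) l1 r2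
      cases c with
      | lam =>
        simp only [step1, mul1]
        cases h : cancel M l1 r2 with
        | none => simp [h]
        | some p => simp [step1]
      | xi =>
        simp only [step1, mul1]
        cases h : cancel M l1 r2 with
        | none => simp [h]
        | some p => simp [step1]
      | rho i =>
        cases l2 with
        | nil =>
          simp only [step1, mul1, cancel_snoc]
          cases h : cancel M l1 r2 with
          | none => simp [h]
          | some p =>
            obtain ⟨l', r'⟩ := p
            rcases hco l' r' h with h' | h'
            · subst h'; simp [step1]
            · subst h'
              cases l' with
              | nil => simp [step1]
              | cons bb lt => cases bb <;> simp [step1]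
        | cons b2 t2 =>
          cases b2 with
          | false =>
            simp only [step1, mul1, if_pos rfl]
            cases h : cancel M l1 r2 with
            | none => simp [h]
            | some p => simp [step1, h]
          | true =>
            simp only [step1, mul1]
            cases h : cancel M l1 r2 with
            | none => simp
            | some p => simp [step1, h]
      | eta i =>
        cases l2 with
        | nil =>
          simp only [step1, mul1, cancel_snoc]
          cases h : cancel M l1 r2 with
          | none => simp [h]
          | some p =>
            obtain ⟨l', r'⟩ := p
            rcases hco l' r' h with h' | h'
            · subst h'; simp [step1]
            · subst h'
              cases l' with
              | nil => simp [step1]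
              | cons bb lt => cases bb <;> simp [step1]
        | cons b2 t2 =>
          cases b2 with
          | true =>
            simp only [step1, mul1, if_pos rfl]
            cases h : cancel M l1 r2 with
            | none => simp [h]
            | some p => simp [step1, h]
          | false =>
            simp only [step1, mul1]
            cases h : cancel M l1 r2 with
            | none => simp
            | some p => simp [step1, h]

lemma foldl_eq_mul1 (e : El1 M) (v : List (Letter1 M)) :
    v.foldl (step1 M) e = mul1 M e (red1 M v) := by
  induction v using List.reverseRecOn with
  | nil => simp [red1]
  | append_singleton vs c ih =>
    rw [List.foldl_append, List.foldl_cons, List.foldl_nil, ih, step1_mul1, red1_snoc]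

lemma red1_append (u v : List (Letter1 M)) :
    red1 M (u ++ v) = mul1 M (red1 M u) (red1 M v) := by
  rw [red1, List.foldl_append, ← red1, foldl_eq_mul1]

lemma red1_cons (a : Letter1 M) (v : List (Letter1 M)) :
    red1 M (a :: v) = mul1 M (red1 M [a]) (red1 M v) := by
  rw [← red1_append]; rfl

@[simp] lemma red1_nil : red1 M [] = one1 M := rfl

@[simp] lemma red1_lam : red1 M [Letter1.lam] = some ([], [false]) := rfl
@[simp] lemma red1_xi : red1 M [Letter1.xi] = some ([], [true]) := rfl
@[simp] lemma red1_rho (i : Fin M) : red1 M [Letter1.rho i] = some ([(false, i)], []) := rfl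
@[simp] lemma red1_eta (i : Fin M) : red1 M [Letter1.eta i] = some ([(true, i)], []) := rfl

lemma red1_single_open (a : Letter1 M) (h : isOpenL a = true) :
    red1 M [a] = some ([], [typL a]) := by
  cases a <;> simp_all [isOpenL, typL]

lemma red1_single_close (a : Letter1 M) (h : isOpenL a = false) :
    ∃ i, red1 M [a] = some ([(typL a, i)], []) := by
  cases a <;> simp_all [isOpenL, typL]


/-! ### Height sums and the structure of reductions -/

def hsum (w : List (Letter1 M)) : ℤ := (w.map ht).sum

@[simp] lemma hsum_nil : hsum ([] : List (Letter1 M)) = 0 := rfl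

lemma hsum_append (u v : List (Letter1 M)) : hsum (u ++ v) = hsum u + hsum v := by
  simp [hsum]

lemma hsum_snoc (u : List (Letter1 M)) (c : Letter1 M) :
    hsum (u ++ [c]) = hsum u + ht c := by simp [hsum]

@[simp] lemma ht_lam : ht (Letter1.lam : Letter1 M) = 1 := rfl
@[simp] lemma ht_xi : ht (Letter1.xi : Letter1 M) = 1 := rfl
@[simp] lemma ht_rho (i : Fin M) : ht (Letter1.rho i) = -1 := rfl
@[simp] lemma ht_eta (i : Fin M) : ht (Letter1.eta i) = -1 := rfl

lemma inv_red (w : List (Letter1 M)) :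
    ∀ r l, red1 M w = some (r, l) →
      (∀ k, 0 ≤ (r.length : ℤ) + hsum (w.take k)) ∧
      ((l.length : ℤ) = (r.length : ℤ) + hsum w) ∧
      (∃ k ≤ w.length, (r.length : ℤ) + hsum (w.take k) = 0) := by
  induction w using List.reverseRecOn with
  | nil =>
    intro r l h
    simp [red1, one1] at h
    obtain ⟨h1, h2⟩ := h
    subst h1; subst h2
    exact ⟨fun k => by simp, by simp, 0, by simp⟩
  | append_singleton u c ih =>
    intro r l h
    rw [red1_snoc] at h
    cases h0 : red1 M u with
    | none => rw [h0] at h; simp [step1] at h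
    | some p =>
      obtain ⟨r0, l0⟩ := p
      rw [h0] at h
      obtain ⟨hpre, hlen, k0, hk0, hz⟩ := ih r0 l0 h0
      have htake : ∀ k, k ≤ u.length → (u ++ [c]).take k = u.take k := by
        intro k hk; rw [List.take_append_of_le_length hk]
      have htake' : ∀ k, u.length < k → (u ++ [c]).take k = u ++ [c] := by
        intro k hk
        apply List.take_of_length_le
        simp; omega
      have hl0 : (0:ℤ) ≤ l0.length := by positivity
      have hr0 : (0:ℤ) ≤ r0.length := by positivity
      have key : ∀ (r' : List (Bool × Fin M)) (l' : List Bool),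
          r = r' → l = l' →
          (0 ≤ (r'.length : ℤ) + hsum u + ht c) →
          ((r'.length : ℤ) = r0.length ∨
            ((r'.length : ℤ) = r0.length + 1 ∧ (r'.length : ℤ) + hsum u + ht c = 0)) →
          ((l'.length : ℤ) = (r'.length : ℤ) + hsum u + ht c) →
          (∀ k, 0 ≤ (r.length : ℤ) + hsum ((u ++ [c]).take k)) ∧
          ((l.length : ℤ) = (r.length : ℤ) + hsum (u ++ [c])) ∧
          (∃ k ≤ (u ++ [c]).length, (r.length : ℤ) + hsum ((u ++ [c]).take k) = 0) := by
        intro r' l' hr hl hlast hrlen hllen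
        subst hr; subst hl
        refine ⟨?_, ?_, ?_⟩
        · intro k
          by_cases hk : k ≤ u.length
          · rw [htake k hk]
            rcases hrlen with he | ⟨he, _⟩
            · rw [he]; exact hpre k
            · rw [he]; have := hpre k; linarith
          · rw [htake' k (by omega), hsum_snoc]; linarith [hlast]
        · rw [hsum_snoc]; linarith [hllen]
        · rcases hrlen with he | ⟨he, hz'⟩
          · refine ⟨k0, by simp; omega, ?_⟩
            rw [htake k0 hk0, he]; exact hz
          · refine ⟨u.length + 1, by simp, ?_⟩
            rw [htake' _ (by omega), hsum_snoc]; linarith [hz']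
      cases c with
      | lam =>
        simp only [step1, Option.some.injEq, Prod.mk.injEq] at h
        exact key r0 (false :: l0) h.1.symm h.2.symm (by simp; linarith)
          (Or.inl rfl) (by simp; linarith)
      | xi =>
        simp only [step1, Option.some.injEq, Prod.mk.injEq] at h
        exact key r0 (true :: l0) h.1.symm h.2.symm (by simp; linarith)
          (Or.inl rfl) (by simp; linarith)
      | rho i =>
        cases l0 with
        | nil =>
          simp only [step1, Option.some.injEq, Prod.mk.injEq] at h
          have hz0 : (r0.length : ℤ) + hsum u = 0 := by simpa using hlen.symm
          refine key (r0 ++ [(false, i)]) [] h.1.symm h.2.symm (by simp; linarith)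
            (Or.inr ⟨by simp, by simp; linarith⟩) (by simp; linarith)
        | cons b t =>
          cases b with
          | false =>
            simp [step1] at h
            refine key r0 t h.1.symm h.2.symm ?_ (Or.inl rfl) ?_
            · simp at hlen ⊢; linarith [show (0:ℤ) ≤ t.length by positivity]
            · simp at hlen ⊢; linarith
          | true => simp [step1] at h
      | eta i =>
        cases l0 with
        | nil =>
          simp only [step1, Option.some.injEq, Prod.mk.injEq] at h
          have hz0 : (r0.length : ℤ) + hsum u = 0 := by simpa using hlen.symm
          refine key (r0 ++ [(true, i)]) [] h.1.symm h.2.symm (by simp; linarith)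
            (Or.inr ⟨by simp, by simp; linarith⟩) (by simp; linarith)
        | cons b t =>
          cases b with
          | true =>
            simp [step1] at h
            refine key r0 t h.1.symm h.2.symm ?_ (Or.inl rfl) ?_
            · simp at hlen ⊢; linarith [show (0:ℤ) ≤ t.length by positivity]
            · simp at hlen ⊢; linarith
          | false => simp [step1] at h

lemma balanced_of_red_one (w : List (Letter1 M)) (h : red1 M w = one1 M) :
    (∀ k, 0 ≤ hsum (w.take k)) ∧ hsum w = 0 := by
  obtain ⟨hpre, hlen, _⟩ := inv_red w [] [] h
  simp at hpre hlen
  exact ⟨hpre, hlen.symm⟩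

lemma red_one_of_balanced (w : List (Letter1 M)) (h : red1 M w ≠ none)
    (hpre : ∀ k, 0 ≤ hsum (w.take k)) (htot : hsum w = 0) : red1 M w = one1 M := by
  cases h0 : red1 M w with
  | none => exact absurd h0 h
  | some p =>
    obtain ⟨r, l⟩ := p
    obtain ⟨_, hlen, k, hk, hz⟩ := inv_red w r l h0
    have h1 : (r.length : ℤ) = 0 := by
      linarith [hpre k, hz, show (0:ℤ) ≤ (r.length:ℤ) by positivity]
    have h2 : (l.length : ℤ) = 0 := by rw [htot] at hlen; linarith
    have hr : r = [] := by simpa using List.length_eq_zero_iff.mp (by exact_mod_cast h1)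
    have hl : l = [] := by simpa using List.length_eq_zero_iff.mp (by exact_mod_cast h2)
    rw [hr, hl]; rfl

/-! ### The bad-pair characterization of vanishing words -/

lemma open_typ_eq (a : Letter1 M) (h : isOpenL a = true) :
    a = (if typL a then Letter1.xi else Letter1.lam) := by
  cases a <;> simp_all [isOpenL, typL]

lemma open_close_one (a c : Letter1 M) (ha : isOpenL a = true) (hc : isOpenL c = false)
    (htyp : typL a = typL c) : mul1 M (red1 M [a]) (red1 M [c]) = one1 M := by
  obtain ⟨i, hi⟩ := red1_single_close c hc
  rw [red1_single_open a ha, hi, ← htyp]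
  simp [mul1, cancel, one1]

lemma pop_lemma : ∀ (N : ℕ) (w : List (Letter1 M)) (r : List (Bool × Fin M)) (b : Bool)
    (l : List Bool), w.length ≤ N → red1 M w = some (r, b :: l) →
    ∃ u a v, w = u ++ a :: v ∧ isOpenL a = true ∧ typL a = b ∧ red1 M v = one1 M ∧
      red1 M u = some (r, l) := by
  intro N
  induction N with
  | zero =>
    intro w r b l hw h
    rw [List.length_eq_zero_iff.mp (Nat.le_zero.mp hw)] at h
    simp [red1, one1] at h
  | succ N ihN =>
    intro w r b l hw h
    rcases List.eq_nil_or_concat w with rfl | ⟨u, d, rfl⟩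
    · simp [red1, one1] at h
    · rw [List.concat_eq_append] at h hw ⊢
      rw [red1_snoc] at h
      have hulen : u.length ≤ N := by simp at hw; omega
      cases h0 : red1 M u with
      | none => rw [h0] at h; simp [step1] at h
      | some p =>
        obtain ⟨r0, l0⟩ := p
        rw [h0] at h
        cases d with
        | lam =>
          simp only [step1, Option.some.injEq, Prod.mk.injEq] at h
          obtain ⟨hr, hl⟩ := h
          obtain ⟨hb, hl'⟩ : false = b ∧ l0 = l := by
            have := hl; exact ⟨List.head_eq_of_cons_eq this, List.tail_eq_of_cons_eq this⟩
          exact ⟨u, .lam, [], rfl, rfl, hb, rfl, by rw [h0, hr, hl']⟩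
        | xi =>
          simp only [step1, Option.some.injEq, Prod.mk.injEq] at h
          obtain ⟨hr, hl⟩ := h
          obtain ⟨hb, hl'⟩ : true = b ∧ l0 = l := by
            have := hl; exact ⟨List.head_eq_of_cons_eq this, List.tail_eq_of_cons_eq this⟩
          exact ⟨u, .xi, [], rfl, rfl, hb, rfl, by rw [h0, hr, hl']⟩
        | rho i =>
          cases l0 with
          | nil => simp [step1] at h
          | cons b0 t =>
            cases b0 with
            | true => simp [step1] at h
            | false =>
              simp [step1] at h
              obtain ⟨hr, hl⟩ := h
              -- red1 u = some (r0, false :: t) with (r0, t) = (r, b :: l)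
              subst hr; subst hl
              obtain ⟨u1, a1, v1, hu, ha1, ht1, hv1, hu1⟩ :=
                ihN u r0 false (b :: l) hulen h0
              have hu1len : u1.length ≤ N := by
                have : u1.length ≤ u.length := by rw [hu]; simp
                omega
              obtain ⟨u2, a2, v2, hu2, ha2, ht2, hv2, hu2'⟩ :=
                ihN u1 r0 b l hu1len hu1
              refine ⟨u2, a2, v2 ++ a1 :: (v1 ++ [.rho i]), ?_, ha2, ht2, ?_, hu2'⟩
              · rw [hu, hu2]; simp
              · have : red1 M (v2 ++ a1 :: (v1 ++ [.rho i]))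
                    = mul1 M (red1 M v2) (mul1 M (red1 M [a1])
                        (mul1 M (red1 M v1) (red1 M [Letter1.rho i]))) := by
                  rw [red1_append, red1_cons, red1_append]
                rw [this, hv2, hv1, mul1_one_left, mul1_one_left]
                exact open_close_one a1 _ ha1 rfl (by simpa [typL] using ht1)
        | eta i =>
          cases l0 with
          | nil => simp [step1] at h
          | cons b0 t =>
            cases b0 with
            | false => simp [step1] at h
            | true =>
              simp [step1] at h
              obtain ⟨hr, hl⟩ := h
              subst hr; subst hl
              obtain ⟨u1, a1, v1, hu, ha1, ht1, hv1, hu1⟩ :=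
                ihN u r0 true (b :: l) hulen h0
              have hu1len : u1.length ≤ N := by
                have : u1.length ≤ u.length := by rw [hu]; simp
                omega
              obtain ⟨u2, a2, v2, hu2, ha2, ht2, hv2, hu2'⟩ :=
                ihN u1 r0 b l hu1len hu1
              refine ⟨u2, a2, v2 ++ a1 :: (v1 ++ [.eta i]), ?_, ha2, ht2, ?_, hu2'⟩
              · rw [hu, hu2]; simp
              · have : red1 M (v2 ++ a1 :: (v1 ++ [.eta i]))
                    = mul1 M (red1 M v2) (mul1 M (red1 M [a1])
                        (mul1 M (red1 M v1) (red1 M [Letter1.eta i]))) := by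
                  rw [red1_append, red1_cons, red1_append]
                rw [this, hv2, hv1, mul1_one_left, mul1_one_left]
                exact open_close_one a1 _ ha1 rfl (by simpa [typL] using ht1)

def BadPair (w : List (Letter1 M)) : Prop :=
  ∃ u a v c z, w = u ++ a :: (v ++ c :: z) ∧ isOpenL a = true ∧ isOpenL c = false ∧
    red1 M v = one1 M ∧ typL a ≠ typL c

lemma red1_none_of_badPair (w : List (Letter1 M)) (h : BadPair w) : red1 M w = none := by
  obtain ⟨u, a, v, c, z, hw, ha, hc, hv, hne⟩ := h
  subst hw
  rw [red1_append u _, red1_cons a _, red1_append v _, red1_cons c z, hv, mul1_one_left]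
  obtain ⟨i, hi⟩ := red1_single_close c hc
  rw [red1_single_open a ha, hi]
  have : mul1 M (some ([], [typL a])) (mul1 M (some ([(typL c, i)], [])) (red1 M z))
      = none := by
    cases hz : red1 M z with
    | none => simp
    | some pz =>
      obtain ⟨rz, lz⟩ := pz
      simp [mul1, cancel, if_neg hne]
  rw [this]; simp

lemma badPair_of_red1_none (w : List (Letter1 M)) (h : red1 M w = none) : BadPair w := by
  induction w using List.reverseRecOn with
  | nil => simp [red1, one1] at h
  | append_singleton u c ih =>
    rw [red1_snoc] at h
    cases h0 : red1 M u with
    | none =>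
      obtain ⟨u', a, v, c', z, hw, ha, hc, hv, hne⟩ := ih h0
      exact ⟨u', a, v, c', z ++ [c], by rw [hw]; simp, ha, hc, hv, hne⟩
    | some p =>
      obtain ⟨r0, l0⟩ := p
      rw [h0] at h
      cases c with
      | lam => simp [step1] at h
      | xi => simp [step1] at h
      | rho i =>
        cases l0 with
        | nil => simp [step1] at h
        | cons b0 t =>
          cases b0 with
          | false => simp [step1] at h
          | true =>
            obtain ⟨u1, a, v, hu, ha, ht, hv, _⟩ :=
              pop_lemma u.length u r0 true t le_rfl h0
            exact ⟨u1, a, v, .rho i, [], by rw [hu]; simp, ha, rfl, hv,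
              by rw [ht]; simp [typL]⟩
      | eta i =>
        cases l0 with
        | nil => simp [step1] at h
        | cons b0 t =>
          cases b0 with
          | true => simp [step1] at h
          | false =>
            obtain ⟨u1, a, v, hu, ha, ht, hv, _⟩ :=
              pop_lemma u.length u r0 false t le_rfl h0
            exact ⟨u1, a, v, .eta i, [], by rw [hu]; simp, ha, rfl, hv,
              by rw [ht]; simp [typL]⟩

lemma red1_none_iff_badPair (w : List (Letter1 M)) : red1 M w = none ↔ BadPair w :=
  ⟨badPair_of_red1_none w, red1_none_of_badPair w⟩

/-! ### Heights for bi-infinite direction sequences -/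

section Heights

variable (b : ℤ → Bool)

def dz (k : ℤ) : ℤ := if b k then 1 else -1

def Spos : ℕ → ℤ
  | 0 => 0
  | (m+1) => Spos m + dz b m

def Tneg : ℕ → ℤ
  | 0 => 0
  | (m+1) => Tneg m + dz b (-((m : ℤ)+1))

def Hgt (k : ℤ) : ℤ := if 0 ≤ k then Spos b k.toNat else -(Tneg b (-k).toNat)

@[simp] lemma Hgt_zero : Hgt b 0 = 0 := by simp [Hgt, Spos]

lemma dz_cases (k : ℤ) : dz b k = 1 ∨ dz b k = -1 := by unfold dz; split <;> simp

lemma Hgt_step (k : ℤ) : Hgt b (k+1) = Hgt b k + dz b k := by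
  rcases le_or_gt 0 k with hk | hk
  · simp only [Hgt]
    rw [if_pos (show (0:ℤ) ≤ k + 1 by omega), if_pos hk]
    have h1 : (k+1).toNat = k.toNat + 1 := by omega
    rw [h1, Spos]
    congr 2
    omega
  · rcases eq_or_lt_of_le (by omega : k + 1 ≤ 0) with h0 | h0
    · have hk1 : k = -1 := by omega
      subst hk1
      norm_num [Hgt, Spos, Tneg]
    · simp only [Hgt]
      rw [if_neg (show ¬ (0:ℤ) ≤ k + 1 by omega), if_neg (show ¬ (0:ℤ) ≤ k by omega)]
      have h1 : (-k).toNat = (-(k+1)).toNat + 1 := by omega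
      rw [h1, Tneg]
      have h2 : -(((-(k+1)).toNat : ℤ) + 1) = k := by omega
      rw [h2]
      ring

lemma Hgt_open (k : ℤ) (h : b k = true) : Hgt b (k+1) = Hgt b k + 1 := by
  rw [Hgt_step]; simp [dz, h]

lemma Hgt_close (k : ℤ) (h : b k = false) : Hgt b (k+1) = Hgt b k - 1 := by
  rw [Hgt_step]; simp [dz, h]; ring

lemma cross_up (c : ℤ) : ∀ (m : ℕ) (a : ℤ), c < Hgt b a → Hgt b (a + m) ≤ c →
    ∃ j, a ≤ j ∧ j ≤ a + m ∧ Hgt b j = c := by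
  intro m
  induction m with
  | zero =>
    intro a h1 h2
    rw [Nat.cast_zero, add_zero] at h2
    exact absurd h2 (not_le.mpr h1)
  | succ m ih =>
    intro a h1 h2
    rcases lt_or_ge c (Hgt b (a+1)) with h3 | h3
    · obtain ⟨j, hj1, hj2, hj3⟩ := ih (a+1) h3 (by
        have : a + 1 + (m : ℤ) = a + ((m : ℕ) + 1 : ℕ) := by push_cast; ring
        rw [this]; exact h2)
      exact ⟨j, by omega, by push_cast at hj2 ⊢; omega, hj3⟩
    · have hs := Hgt_step b a
      rcases dz_cases b a with h | h <;> rw [h] at hs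
      · exact ⟨a + 1, by omega, by push_cast; omega, by linarith⟩
      · exact ⟨a + 1, by omega, by push_cast; omega, by linarith⟩

lemma cross_down (c : ℤ) : ∀ (m : ℕ) (a : ℤ), Hgt b a < c → c ≤ Hgt b (a + m) →
    ∃ j, a ≤ j ∧ j ≤ a + m ∧ Hgt b j = c := by
  intro m
  induction m with
  | zero =>
    intro a h1 h2
    rw [Nat.cast_zero, add_zero] at h2
    exact absurd h2 (not_le.mpr h1)
  | succ m ih =>
    intro a h1 h2
    rcases lt_or_ge (Hgt b (a+1)) c with h3 | h3
    · obtain ⟨j, hj1, hj2, hj3⟩ := ih (a+1) h3 (by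
        have : a + 1 + (m : ℤ) = a + ((m : ℕ) + 1 : ℕ) := by push_cast; ring
        rw [this]; exact h2)
      exact ⟨j, by omega, by push_cast at hj2 ⊢; omega, hj3⟩
    · have hs := Hgt_step b a
      rcases dz_cases b a with h | h <;> rw [h] at hs
      · exact ⟨a + 1, by omega, by push_cast; omega, by linarith⟩
      · exact ⟨a + 1, by omega, by push_cast; omega, by linarith⟩

variable (n : ℕ)

lemma Hgt_shift (hper : ∀ k, b (k + n) = b k) :
    ∀ k, Hgt b (k + n) = Hgt b k + Hgt b n := by
  have hg : ∀ k, Hgt b (k + 1 + n) - Hgt b (k + 1) = Hgt b (k + n) - Hgt b k := by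
    intro k
    have e1 : k + 1 + (n : ℤ) = (k + n) + 1 := by ring
    rw [e1, Hgt_step, Hgt_step]
    have : dz b (k + n) = dz b k := by unfold dz; rw [hper]
    rw [this]; ring
  have key : ∀ k, Hgt b (k + n) - Hgt b k = Hgt b n := by
    intro k
    induction k using Int.induction_on with
    | zero => simp
    | succ i ih => rw [hg i] ; exact ih
    | pred i ih =>
      have h5 := hg (-(i:ℤ) - 1)
      rw [show -(i:ℤ) - 1 + 1 = -(i:ℤ) by ring] at h5
      ring_nf at h5 ih ⊢
      linarith [h5, ih]
  intro k
  have := key k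
  linarith

/-- The canonical matching relation determined by the height function. -/
def PR (p q : ℤ) : Prop :=
  p < q ∧ Hgt b (q+1) = Hgt b p ∧ ∀ j, p < j → j ≤ q → Hgt b p < Hgt b j

lemma PR.open_left {p q : ℤ} (h : PR b p q) : b p = true := by
  obtain ⟨h1, h2, h3⟩ := h
  by_contra hb
  have hb' : b p = false := by revert hb; cases b p <;> simp
  have := Hgt_close b p hb'
  have := h3 (p+1) (by omega) (by omega)
  linarith

lemma PR.close_right {p q : ℤ} (h : PR b p q) : b q = false := by
  obtain ⟨h1, h2, h3⟩ := h
  by_contra hb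
  have hb' : b q = true := by revert hb; cases b q <;> simp
  have := Hgt_open b q hb'
  have := h3 q (by omega) (by omega)
  linarith

lemma PR.unique_right {p q q' : ℤ} (h : PR b p q) (h' : PR b p q') : q = q' := by
  obtain ⟨a1, a2, a3⟩ := h
  obtain ⟨b1, b2, b3⟩ := h'
  by_contra hne
  rcases lt_or_gt_of_ne hne with hlt | hlt
  · have := b3 (q+1) (by omega) (by omega)
    linarith
  · have := a3 (q'+1) (by omega) (by omega)
    linarith

lemma PR.unique_left {p p' q : ℤ} (h : PR b p q) (h' : PR b p' q) : p = p' := by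
  obtain ⟨a1, a2, a3⟩ := h
  obtain ⟨b1, b2, b3⟩ := h'
  by_contra hne
  rcases lt_or_gt_of_ne hne with hlt | hlt
  · have := a3 p' (by omega) (by omega)
    linarith
  · have := b3 p (by omega) (by omega)
    linarith

lemma PR_exists_fwd (hper : ∀ k, b (k + n) = b k) (hn : 1 ≤ n) (hD : Hgt b n ≤ 0) (p : ℤ) (hp : b p = true) :
    ∃ q, PR b p q := by
  classical
  have h1 : Hgt b (p + 1) = Hgt b p + 1 := Hgt_open b p hp
  have h2 : Hgt b (p + n) ≤ Hgt b p := by rw [Hgt_shift b n hper p]; linarith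
  obtain ⟨j, hj1, hj2, hj3⟩ := cross_up b (Hgt b p) (n - 1) (p + 1) (by omega)
    (by
      have : p + 1 + ((n - 1 : ℕ) : ℤ) = p + n := by push_cast; omega
      rw [this]; exact h2)
  obtain ⟨lb, ⟨hlb1, hlb2⟩, hlb3⟩ := Int.exists_least_of_bdd
    (P := fun z => p + 1 ≤ z ∧ Hgt b z = Hgt b p)
    ⟨p + 1, fun z hz => hz.1⟩ ⟨j, hj1, hj3⟩
  have hlbne : lb ≠ p + 1 := by
    intro he; rw [he] at hlb2; omega
  refine ⟨lb - 1, by omega, by rw [show lb - 1 + 1 = lb by ring]; exact hlb2, ?_⟩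
  intro j' hj1' hj2'
  by_contra hcon
  push_neg at hcon
  rcases eq_or_lt_of_le hcon with he | hlt
  · exact absurd (hlb3 j' ⟨by omega, he⟩) (by omega)
  · obtain ⟨j'', hj1'', hj2'', hj3''⟩ := cross_up b (Hgt b p) (j' - (p+1)).toNat (p + 1)
      (by omega) (by
        have : p + 1 + ((j' - (p+1)).toNat : ℤ) = j' := by omega
        rw [this]; omega)
    have := hlb3 j'' ⟨hj1'', hj3''⟩
    omega

lemma PR_exists_bwd (hper : ∀ k, b (k + n) = b k) (hn : 1 ≤ n) (hD : 0 < Hgt b n) (q : ℤ) (hq : b q = false) :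
    ∃ p, PR b p q := by
  classical
  have h1 : Hgt b (q + 1) = Hgt b q - 1 := Hgt_close b q hq
  have h2 : Hgt b (q + 1 - n) < Hgt b (q + 1) := by
    have := Hgt_shift b n hper (q + 1 - n)
    rw [show q + 1 - (n:ℤ) + n = q + 1 by ring] at this
    linarith
  obtain ⟨j, hj1, hj2, hj3⟩ := cross_down b (Hgt b (q+1)) (n - 1) (q + 1 - n) h2
    (by
      have : q + 1 - n + ((n - 1 : ℕ) : ℤ) = q := by push_cast; omega
      rw [this]; omega)
  obtain ⟨ub, ⟨hub1, hub2⟩, hub3⟩ := Int.exists_greatest_of_bdd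
    (P := fun z => z ≤ q ∧ Hgt b z = Hgt b (q+1))
    ⟨q, fun z hz => hz.1⟩ ⟨j, by omega, hj3⟩
  have hubne : ub ≠ q := by
    intro he; rw [he] at hub2; omega
  refine ⟨ub, by omega, hub2.symm, ?_⟩
  intro j' hj1' hj2'
  rw [hub2]
  by_contra hcon
  push_neg at hcon
  rcases eq_or_lt_of_le hcon with he | hlt
  · exact absurd (hub3 j' ⟨by omega, he⟩) (by omega)
  · obtain ⟨j'', hj1'', hj2'', hj3''⟩ := cross_down b (Hgt b (q+1)) (q - j').toNat j'
      (by omega) (by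
        have : j' + ((q - j').toNat : ℤ) = q := by omega
        rw [this]; omega)
    have := hub3 j'' ⟨by omega, hj3''⟩
    omega

lemma PR_shift (hper : ∀ k, b (k + n) = b k) {p q : ℤ} (h : PR b p q) : PR b (p + n) (q + n) := by
  obtain ⟨h1, h2, h3⟩ := h
  refine ⟨by omega, ?_, ?_⟩
  · rw [show q + (n:ℤ) + 1 = (q + 1) + n by ring, Hgt_shift b n hper, Hgt_shift b n hper]
    omega
  · intro j hj1 hj2
    have := h3 (j - n) (by omega) (by omega)
    have e := Hgt_shift b n hper (j - n)
    rw [show j - (n:ℤ) + n = j by ring] at e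
    have e2 := Hgt_shift b n hper p
    omega

lemma PR_shift_back (hper : ∀ k, b (k + n) = b k) {p q : ℤ} (h : PR b (p + n) (q + n)) : PR b p q := by
  obtain ⟨h1, h2, h3⟩ := h
  refine ⟨by omega, ?_, ?_⟩
  · have e1 := Hgt_shift b n hper (q + 1)
    have e2 := Hgt_shift b n hper p
    rw [show q + 1 + (n:ℤ) = q + n + 1 by ring] at e1
    omega
  · intro j hj1 hj2
    have := h3 (j + n) (by omega) (by omega)
    have e := Hgt_shift b n hper j
    have e2 := Hgt_shift b n hper p
    omega

end Heights

/-! ### Factors of bi-infinite sequences -/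

section Factors

variable (s : ℤ → Letter1 M)

def factorW (i : ℤ) (m : ℕ) : List (Letter1 M) := List.ofFn fun k : Fin m => s (i + k)

@[simp] lemma factorW_zero (i : ℤ) : factorW s i 0 = [] := rfl

@[simp] lemma factorW_one (i : ℤ) : factorW s i 1 = [s i] := by
  simp [factorW, List.ofFn_succ]

lemma factorW_cons (i : ℤ) (m : ℕ) :
    factorW s i (m+1) = s i :: factorW s (i+1) m := by
  rw [factorW, List.ofFn_succ]
  congr 1
  · norm_num
  · rw [factorW]
    congr 1
    funext k
    congr 1
    simp [Fin.val_succ]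
    push_cast
    ring

lemma factorW_snoc (i : ℤ) (m : ℕ) :
    factorW s i (m+1) = factorW s i m ++ [s (i + m)] := by
  induction m generalizing i with
  | zero => simp [factorW_cons]
  | succ m ih =>
    rw [factorW_cons, ih (i+1), factorW_cons]
    simp only [List.cons_append]
    congr 3
    push_cast
    ring

lemma factorW_length (i : ℤ) (m : ℕ) : (factorW s i m).length = m := by
  simp [factorW]

lemma factorW_append (i : ℤ) (m₁ m₂ : ℕ) :
    factorW s i (m₁ + m₂) = factorW s i m₁ ++ factorW s (i + m₁) m₂ := by
  induction m₂ with
  | zero => simp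
  | succ m₂ ih =>
    rw [show m₁ + (m₂ + 1) = (m₁ + m₂) + 1 from rfl, factorW_snoc, ih, factorW_snoc]
    simp only [List.append_assoc]
    congr 3
    push_cast
    ring

lemma factorW_take (i : ℤ) (m k : ℕ) :
    (factorW s i m).take k = factorW s i (min k m) := by
  apply List.ext_getElem
  · simp [factorW]
  · intro j h1 h2
    simp [factorW]

lemma eq_factorW_of_append {i : ℤ} {m : ℕ} (u w z : List (Letter1 M))
    (h : factorW s i m = u ++ w ++ z) : w = factorW s (i + u.length) w.length := by
  have hlen : m = u.length + w.length + z.length := by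
    have := congrArg List.length h
    simp [factorW_length] at this
    omega
  rw [hlen, factorW_append, factorW_append] at h
  have h1 := List.append_inj h (by simp [factorW_length])
  have h2 := List.append_inj h1.1 (by simp [factorW_length])
  exact h2.2.symm

/-- The combinatorial admissibility condition: every matched pair has equal types. -/
def AdmP (s : ℤ → Letter1 M) : Prop :=
  ∀ (p : ℤ) (m : ℕ), isOpenL (s p) = true → isOpenL (s (p + 1 + m)) = false →
    red1 M (factorW s (p+1) m) = one1 M → typL (s p) = typL (s (p + 1 + m))

lemma inXShift_iff_admP : inXShift M s ↔ AdmP s := by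
  constructor
  · intro hX p m hop hcl hone
    by_contra hne
    have hbp : BadPair (factorW s p (m + 2)) := by
      refine ⟨[], s p, factorW s (p+1) m, s (p + 1 + m), [], ?_, hop, hcl, hone, hne⟩
      rw [show m + 2 = (m + 1) + 1 from rfl, factorW_snoc, factorW_cons]
      simp only [List.nil_append, List.cons_append, List.append_cancel_left_eq,
        List.cons.injEq, and_true]
      refine ⟨trivial, ?_⟩
      congr 1
      push_cast
      ring
    have := red1_none_of_badPair _ hbp
    exact hX p (m + 2) this
  · intro hP i m
    intro hnone
    obtain ⟨u, a, v, c, z, hw, ha, hc, hv, hne⟩ := badPair_of_red1_none _ hnone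
    have hw' : factorW s i m = u ++ ([a] ++ (v ++ ([c] ++ z))) := by
      rw [factorW, hw]; simp
    set p : ℤ := i + u.length with hp
    have h1 : [a] = factorW s p 1 := by
      have := eq_factorW_of_append s u [a] (v ++ ([c] ++ z)) (by rw [hw']; simp)
      simpa using this
    have ha' : a = s p := by simpa using h1
    have h2 : v = factorW s (p + 1) v.length := by
      have h := eq_factorW_of_append s (u ++ [a]) v ([c] ++ z) (by rw [hw']; simp)
      rw [show (i + ↑(u ++ [a]).length : ℤ) = p + 1 by
        simp only [List.length_append, List.length_cons, List.length_nil, hp]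
        push_cast
        ring] at h
      exact h
    have h3 : [c] = factorW s (p + 1 + v.length) 1 := by
      have h := eq_factorW_of_append s (u ++ [a] ++ v) [c] z (by rw [hw']; simp)
      rw [show (i + ↑(u ++ [a] ++ v).length : ℤ) = p + 1 + v.length by
        simp only [List.length_append, List.length_cons, List.length_nil, hp]
        push_cast
        ring] at h
      simpa using h
    have hc' : c = s (p + 1 + v.length) := by simpa using h3
    apply hne
    rw [ha', hc']
    exact hP p v.length (ha' ▸ ha) (hc' ▸ hc) (h2 ▸ hv)

variable (b : ℤ → Bool)

lemma ht_eq_dz (hb : ∀ k, isOpenL (s k) = b k) (k : ℤ) : ht (s k) = dz b k := by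
  rw [ht, dz, hb]

lemma hsum_factorW (hb : ∀ k, isOpenL (s k) = b k) (i : ℤ) (m : ℕ) :
    hsum (factorW s i m) = Hgt b (i + m) - Hgt b i := by
  induction m with
  | zero => simp
  | succ m ih =>
    rw [factorW_snoc, hsum_snoc, ih, ht_eq_dz s b hb]
    have : i + ((m : ℕ) + 1 : ℕ) = (i + m) + 1 := by push_cast; ring
    rw [this, Hgt_step]
    ring

lemma PR_of_red_one (hb : ∀ k, isOpenL (s k) = b k) (p : ℤ) (m : ℕ) (hop : isOpenL (s p) = true)
    (hcl : isOpenL (s (p + 1 + m)) = false)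
    (hone : red1 M (factorW s (p+1) m) = one1 M) : PR b p (p + 1 + m) := by
  obtain ⟨hpre, htot⟩ := balanced_of_red_one _ hone
  have hopb : b p = true := by rw [← hb]; exact hop
  have hclb : b (p + 1 + m) = false := by rw [← hb]; exact hcl
  have hHop : Hgt b (p + 1) = Hgt b p + 1 := Hgt_open b p hopb
  have hHq : Hgt b (p + 1 + m) = Hgt b (p + 1) := by
    have := hsum_factorW s b hb (p+1) m
    rw [htot] at this
    linarith
  have hHq1 : Hgt b (p + 1 + m + 1) = Hgt b (p + 1 + m) - 1 := Hgt_close b _ hclb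
  refine ⟨by omega, by omega, ?_⟩
  intro j hj1 hj2
  have hk : ∃ k : ℕ, j = p + 1 + k ∧ k ≤ m := by
    refine ⟨(j - p - 1).toNat, by omega, by omega⟩
  obtain ⟨k, rfl, hkm⟩ := hk
  have := hpre k
  rw [factorW_take, min_eq_left hkm, hsum_factorW s b hb] at this
  omega

lemma red_one_of_PR (hb : ∀ k, isOpenL (s k) = b k) (p : ℤ) (m : ℕ)
    (hcl : isOpenL (s (p + 1 + m)) = false)
    (hPR : PR b p (p + 1 + m))
    (hnone : red1 M (factorW s (p+1) m) ≠ none) :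
    red1 M (factorW s (p+1) m) = one1 M := by
  obtain ⟨h1, h2, h3⟩ := hPR
  have hopb : b p = true := PR.open_left b ⟨h1, h2, h3⟩
  have hclb : b (p + 1 + m) = false := by rw [← hb]; exact hcl
  have hHop : Hgt b (p + 1) = Hgt b p + 1 := Hgt_open b p hopb
  have hHq1 : Hgt b (p + 1 + m + 1) = Hgt b (p + 1 + m) - 1 := Hgt_close b _ hclb
  apply red_one_of_balanced _ hnone
  · intro k
    rw [factorW_take, hsum_factorW s b hb]
    rcases Nat.le_total k m with hk | hk
    · rw [min_eq_left hk]
      rcases Nat.eq_zero_or_pos k with rfl | hkpos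
      · simp
      · have := h3 (p + 1 + (k:ℤ)) (by omega) (by omega)
        omega
    · rw [min_eq_right hk]
      have := h3 (p + 1 + m) (by omega) (by omega)
      omega
  · rw [hsum_factorW s b hb]
    have := h3 (p + 1 + m) (by omega) (by omega)
    omega

end Factors

/-! ### Periodic points as admissible blocks -/

section Periodize

variable {n : ℕ}

def toFinZ (n : ℕ) (hn : 0 < n) (k : ℤ) : Fin n :=
  ⟨(k % (n:ℤ)).toNat, by
    have hne : (n:ℤ) ≠ 0 := by exact_mod_cast hn.ne'
    have h1 : 0 ≤ k % (n:ℤ) := Int.emod_nonneg k hne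
    have h2 : k % (n:ℤ) < n := Int.emod_lt_of_pos k (by exact_mod_cast hn)
    omega⟩

lemma toFinZ_coe (hn : 0 < n) (j : Fin n) : toFinZ n hn (j : ℤ) = j := by
  apply Fin.ext
  simp only [toFinZ]
  rw [Int.emod_eq_of_lt (by positivity) (by exact_mod_cast j.2)]
  simp

lemma toFinZ_add_n (hn : 0 < n) (k : ℤ) : toFinZ n hn (k + n) = toFinZ n hn k := by
  apply Fin.ext
  simp only [toFinZ]
  congr 1
  rw [show k + (n:ℤ) = k + 1 * n by ring, Int.add_mul_emod_self_right]

lemma toFinZ_coe_val (hn : 0 < n) (k : ℤ) : ((toFinZ n hn k : Fin n) : ℤ) = k % n := by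
  simp only [toFinZ]
  have hne : (n:ℤ) ≠ 0 := by exact_mod_cast hn.ne'
  have h1 : 0 ≤ k % (n:ℤ) := Int.emod_nonneg k hne
  omega

lemma toFinZ_add_mul (hn : 0 < n) (k t : ℤ) : toFinZ n hn (k + t * n) = toFinZ n hn k := by
  apply Fin.ext
  simp only [toFinZ]
  congr 1
  exact Int.add_mul_emod_self_right _ _ _

def extW (hn : 0 < n) (w : Fin n → Letter1 M) (k : ℤ) : Letter1 M := w (toFinZ n hn k)

lemma extW_per (hn : 0 < n) (w : Fin n → Letter1 M) (k : ℤ) :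
    extW hn w (k + n) = extW hn w k := by
  rw [extW, extW, toFinZ_add_n]

lemma extW_coe (hn : 0 < n) (w : Fin n → Letter1 M) (j : Fin n) :
    extW hn w (j : ℤ) = w j := by
  rw [extW, toFinZ_coe]

lemma periodic_eq_emod {x : ℤ → Letter1 M} (hn : 0 < n)
    (hx : ∀ k : ℤ, x (k + n) = x k) (k : ℤ) : x k = x (k % n) := by
  have hmul : ∀ t : ℤ, ∀ k : ℤ, x (k + t * n) = x k := by
    intro t
    induction t using Int.induction_on with
    | zero => intro k; simp
    | succ i ih =>
      intro k
      rw [show k + ((i:ℤ) + 1) * n = (k + i * n) + n by ring, hx, ih]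
    | pred i ih =>
      intro k
      rw [show k + (-(i:ℤ) - 1) * n = (k - n) + (-(i:ℤ)) * n by ring, ih, ← hx,
        show k - (n:ℤ) + n = k by ring]
  conv_lhs => rw [show k = k % n + (k / n) * n by rw [mul_comm]; exact (Int.emod_add_mul_ediv k n).symm]
  rw [hmul]

lemma pX_eq_card_blocks (hn : 0 < n) :
    pX M n = Nat.card {w : Fin n → Letter1 M // inXShift M (extW hn w)} := by
  apply Nat.card_congr
  refine ⟨fun x => ⟨fun j => x.1 j, ?_⟩, fun w => ⟨extW hn w.1, w.2, fun k => extW_per hn w.1 k⟩,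
    ?_, ?_⟩
  · obtain ⟨x, hX, hp⟩ := x
    have he : extW hn (fun j => x (j : ℤ)) = x := by
      funext k
      rw [extW, periodic_eq_emod hn hp k]
      congr 1
      exact toFinZ_coe_val hn k
    simpa [he] using hX
  · rintro ⟨x, hX, hp⟩
    apply Subtype.ext
    funext k
    simp only
    rw [extW, periodic_eq_emod hn hp k]
    congr 1
    exact toFinZ_coe_val hn k
  · rintro ⟨w, hw⟩
    apply Subtype.ext
    funext j
    simp only
    rw [extW_coe]

end Periodize

/-! ### Letter constructors and data -/

instance : Fintype (Letter1 M) :=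
  Fintype.ofSurjective (fun x : Bool ⊕ (Bool × Fin M) => match x with
    | .inl false => Letter1.lam
    | .inl true => Letter1.xi
    | .inr (false, i) => Letter1.rho i
    | .inr (true, i) => Letter1.eta i)
    (by
      intro a
      cases a with
      | lam => exact ⟨.inl false, rfl⟩
      | xi => exact ⟨.inl true, rfl⟩
      | rho i => exact ⟨.inr (false, i), rfl⟩
      | eta i => exact ⟨.inr (true, i), rfl⟩)

def mkOpen : Bool → Letter1 M := fun t => if t then .xi else .lam

def mkClose : Bool → Fin M → Letter1 M := fun t i => if t then .eta i else .rho i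

def idxC (hM : 0 < M) : Letter1 M → Fin M
  | .rho i => i
  | .eta i => i
  | _ => ⟨0, hM⟩

@[simp] lemma isOpenL_mkOpen (t : Bool) : isOpenL (mkOpen (M := M) t) = true := by
  cases t <;> rfl

@[simp] lemma isOpenL_mkClose (t : Bool) (i : Fin M) : isOpenL (mkClose t i) = false := by
  cases t <;> rfl

@[simp] lemma typL_mkOpen (t : Bool) : typL (mkOpen (M := M) t) = t := by
  cases t <;> rfl

@[simp] lemma typL_mkClose (t : Bool) (i : Fin M) : typL (mkClose t i) = t := by
  cases t <;> rfl

@[simp] lemma idxC_mkClose (hM : 0 < M) (t : Bool) (i : Fin M) :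
    idxC hM (mkClose t i) = i := by
  cases t <;> rfl

lemma mkOpen_typL (a : Letter1 M) (h : isOpenL a = true) : mkOpen (typL a) = a := by
  cases a <;> simp_all [isOpenL, typL, mkOpen]

lemma mkClose_typL (hM : 0 < M) (a : Letter1 M) (h : isOpenL a = false) :
    mkClose (typL a) (idxC hM a) = a := by
  cases a <;> simp_all [isOpenL, typL, mkClose, idxC]

/-! ### The pattern and the reconstruction map -/

section Construction

variable {n : ℕ}

def pattF (w : Fin n → Letter1 M) : Finset (Fin n) :=
  Finset.univ.filter (fun j => isOpenL (w j) = true)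

lemma mem_pattF (w : Fin n → Letter1 M) (j : Fin n) :
    j ∈ pattF w ↔ isOpenL (w j) = true := by simp [pattF]

def bA (hn : 0 < n) (A : Finset (Fin n)) : ℤ → Bool := fun k => decide (toFinZ n hn k ∈ A)

lemma bA_per (hn : 0 < n) (A : Finset (Fin n)) (k : ℤ) :
    bA hn A (k + n) = bA hn A k := by simp [bA, toFinZ_add_n]

lemma bA_mul (hn : 0 < n) (A : Finset (Fin n)) (k t : ℤ) :
    bA hn A (k + t * n) = bA hn A k := by simp [bA, toFinZ_add_mul]

lemma bA_coe (hn : 0 < n) (A : Finset (Fin n)) (j : Fin n) :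
    bA hn A (j : ℤ) = decide (j ∈ A) := by simp [bA, toFinZ_coe]

lemma Spos_eq_sum (b : ℤ → Bool) (m : ℕ) : Spos b m = ∑ j ∈ Finset.range m, dz b j := by
  induction m with
  | zero => simp [Spos]
  | succ m ih => rw [Spos, ih, Finset.sum_range_succ]

lemma drift_bA (hn : 0 < n) (A : Finset (Fin n)) :
    Hgt (bA hn A) n = 2 * (A.card : ℤ) - n := by
  rw [Hgt, if_pos (by positivity), Int.toNat_natCast, Spos_eq_sum,
    ← Fin.sum_univ_eq_sum_range (fun j => dz (bA hn A) j)]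
  have h1 : ∀ j : Fin n, dz (bA hn A) (j : ℤ) = 2 * (if j ∈ A then (1:ℤ) else 0) - 1 := by
    intro j
    rw [dz, bA_coe]
    by_cases hj : j ∈ A <;> simp [hj]
  rw [Finset.sum_congr rfl (fun j _ => h1 j), Finset.sum_sub_distrib, ← Finset.mul_sum]
  have h2 : ∑ j : Fin n, (if j ∈ A then (1:ℤ) else 0) = A.card := by
    rw [Finset.sum_ite_mem, Finset.univ_inter, Finset.sum_const, nsmul_eq_mul, mul_one]
  rw [h2]
  simp [mul_comm]

lemma hbW (hn : 0 < n) {A : Finset (Fin n)} {w : Fin n → Letter1 M} (hpatt : pattF w = A)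
    (k : ℤ) : isOpenL (extW hn w k) = bA hn A k := by
  rw [extW, bA, ← hpatt]
  by_cases h : isOpenL (w (toFinZ n hn k)) = true
  · simp [h, mem_pattF]
  · have h' : isOpenL (w (toFinZ n hn k)) = false := by
      revert h; cases isOpenL (w (toFinZ n hn k)) <;> simp
    simp [h', mem_pattF]

noncomputable def frA (hn : 0 < n) (A : Finset (Fin n)) (p : ℤ) : ℤ :=
  if h : 2 * A.card ≤ n ∧ bA hn A p = true then
    Classical.choose (PR_exists_fwd (bA hn A) n (bA_per hn A) hn
      (by rw [drift_bA hn A]; omega) p h.2)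
  else 0

lemma frA_spec (hn : 0 < n) (A : Finset (Fin n)) (p : ℤ) (hs : 2 * A.card ≤ n)
    (hp : bA hn A p = true) : PR (bA hn A) p (frA hn A p) := by
  rw [frA, dif_pos ⟨hs, hp⟩]
  exact Classical.choose_spec _

noncomputable def brA (hn : 0 < n) (A : Finset (Fin n)) (q : ℤ) : ℤ :=
  if h : n < 2 * A.card ∧ bA hn A q = false then
    Classical.choose (PR_exists_bwd (bA hn A) n (bA_per hn A) hn
      (by rw [drift_bA hn A]; omega) q h.2)
  else 0

lemma brA_spec (hn : 0 < n) (A : Finset (Fin n)) (q : ℤ) (hs : n < 2 * A.card)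
    (hq : bA hn A q = false) : PR (bA hn A) (brA hn A q) q := by
  rw [brA, dif_pos ⟨hs, hq⟩]
  exact Classical.choose_spec (PR_exists_bwd (bA hn A) n (bA_per hn A) hn
    (by rw [drift_bA hn A]; omega) q hq)

lemma frA_shift (hn : 0 < n) (A : Finset (Fin n)) (hs : 2 * A.card ≤ n) (p : ℤ)
    (hp : bA hn A p = true) : frA hn A (p + n) = frA hn A p + n := by
  have h1 := frA_spec hn A p hs hp
  have h2 := PR_shift (bA hn A) n (bA_per hn A) h1
  have h3 := frA_spec hn A (p + n) hs (by rw [bA_per]; exact hp)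
  exact PR.unique_right _ h3 h2

lemma frA_shift_mul (hn : 0 < n) (A : Finset (Fin n)) (hs : 2 * A.card ≤ n) (p : ℤ)
    (hp : bA hn A p = true) : ∀ t : ℤ, frA hn A (p + t * n) = frA hn A p + t * n := by
  intro t
  induction t using Int.induction_on with
  | zero => simp
  | succ i ih =>
    rw [show p + ((i:ℤ) + 1) * n = (p + i * n) + n by ring,
      frA_shift hn A hs _ (by rw [bA_mul]; exact hp), ih]
    ring
  | pred i ih =>
    have key : frA hn A ((p + (-(i:ℤ) - 1) * n) + n) = frA hn A (p + (-(i:ℤ) - 1) * n) + n :=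
      frA_shift hn A hs _ (by rw [bA_mul]; exact hp)
    rw [show (p + (-(i:ℤ) - 1) * n) + n = p + (-(i:ℤ)) * n by ring] at key
    rw [ih] at key
    linarith [key]

lemma brA_shift (hn : 0 < n) (A : Finset (Fin n)) (hs : n < 2 * A.card) (q : ℤ)
    (hq : bA hn A q = false) : brA hn A (q + n) = brA hn A q + n := by
  have h1 := brA_spec hn A q hs hq
  have h2 := PR_shift (bA hn A) n (bA_per hn A) h1
  have h3 := brA_spec hn A (q + n) hs (by rw [bA_per]; exact hq)
  exact PR.unique_left _ h3 h2

lemma brA_shift_mul (hn : 0 < n) (A : Finset (Fin n)) (hs : n < 2 * A.card) (q : ℤ)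
    (hq : bA hn A q = false) : ∀ t : ℤ, brA hn A (q + t * n) = brA hn A q + t * n := by
  intro t
  induction t using Int.induction_on with
  | zero => simp
  | succ i ih =>
    rw [show q + ((i:ℤ) + 1) * n = (q + i * n) + n by ring,
      brA_shift hn A hs _ (by rw [bA_mul]; exact hq), ih]
    ring
  | pred i ih =>
    have key : brA hn A ((q + (-(i:ℤ) - 1) * n) + n) = brA hn A (q + (-(i:ℤ) - 1) * n) + n :=
      brA_shift hn A hs _ (by rw [bA_mul]; exact hq)
    rw [show (q + (-(i:ℤ) - 1) * n) + n = q + (-(i:ℤ)) * n by ring] at key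
    rw [ih] at key
    linarith [key]

lemma self_decomp (hn : 0 < n) (p : ℤ) : p = (toFinZ n hn p : ℤ) + (p / n) * n := by
  rw [toFinZ_coe_val]
  have := Int.emod_add_mul_ediv p n
  linarith [this]

lemma frA_mod (hn : 0 < n) (A : Finset (Fin n)) (hs : 2 * A.card ≤ n) (p : ℤ)
    (hp : bA hn A p = true) :
    toFinZ n hn (frA hn A p) = toFinZ n hn (frA hn A (toFinZ n hn p : ℤ)) := by
  have hb0 : bA hn A ((toFinZ n hn p : ℤ)) = true := by
    rw [bA_coe]
    have : bA hn A p = decide (toFinZ n hn p ∈ A) := rfl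
    rw [← this]; exact hp
  conv_lhs => rw [self_decomp hn p]
  rw [frA_shift_mul hn A hs _ hb0 (p / n), toFinZ_add_mul]

lemma brA_mod (hn : 0 < n) (A : Finset (Fin n)) (hs : n < 2 * A.card) (q : ℤ)
    (hq : bA hn A q = false) :
    toFinZ n hn (brA hn A q) = toFinZ n hn (brA hn A (toFinZ n hn q : ℤ)) := by
  have hb0 : bA hn A ((toFinZ n hn q : ℤ)) = false := by
    rw [bA_coe]
    have : bA hn A q = decide (toFinZ n hn q ∈ A) := rfl
    rw [← this]; exact hq
  conv_lhs => rw [self_decomp hn q]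
  rw [brA_shift_mul hn A hs _ hb0 (q / n), toFinZ_add_mul]

end Construction

/-! ### The reconstruction map and the block bijection -/

section Bijection

variable {n : ℕ}

noncomputable def Gmap (hn : 0 < n) (hM : 0 < M) (A : Finset (Fin n))
    (tb : {j : Fin n // j ∈ A ↔ n < 2 * A.card} → Bool)
    (ix : {j : Fin n // j ∉ A} → Fin M) : Fin n → Letter1 M := fun j =>
  if hj : j ∈ A then
    (if hs : 2 * A.card ≤ n then
      mkOpen (tb ⟨toFinZ n hn (frA hn A (j : ℤ)), by
        have hPR := frA_spec hn A (j : ℤ) hs (by rw [bA_coe]; simpa using hj)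
        have hcl := PR.close_right _ hPR
        rw [bA] at hcl
        simp only [decide_eq_false_iff_not] at hcl
        exact iff_of_false hcl (by omega)⟩)
    else
      mkOpen (tb ⟨j, iff_of_true hj (by omega)⟩))
  else
    mkClose
      (if hs : 2 * A.card ≤ n then tb ⟨j, iff_of_false hj (by omega)⟩
       else tb ⟨toFinZ n hn (brA hn A (j : ℤ)), by
        have hPR := brA_spec hn A (j : ℤ) (by omega) (by rw [bA_coe]; simpa using hj)
        have hop := PR.open_left _ hPR
        rw [bA] at hop
        simp only [decide_eq_true_eq] at hop
        exact iff_of_true hop (by omega)⟩)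
      (ix ⟨j, hj⟩)

lemma isOpen_Gmap (hn : 0 < n) (hM : 0 < M) (A : Finset (Fin n)) (tb) (ix) (j : Fin n) :
    isOpenL (Gmap hn hM A tb ix j) = decide (j ∈ A) := by
  by_cases hj : j ∈ A
  · rw [Gmap, dif_pos hj]
    split <;> simp [hj]
  · rw [Gmap, dif_neg hj]
    simp [hj]

lemma pattF_Gmap (hn : 0 < n) (hM : 0 < M) (A : Finset (Fin n)) (tb) (ix) :
    pattF (Gmap hn hM A tb ix) = A := by
  ext j
  rw [mem_pattF, isOpen_Gmap]
  simp

lemma hbG (hn : 0 < n) (hM : 0 < M) (A : Finset (Fin n)) (tb) (ix) (k : ℤ) :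
    isOpenL (extW hn (Gmap hn hM A tb ix) k) = bA hn A k :=
  hbW hn (pattF_Gmap hn hM A tb ix) k

lemma adm_Gmap (hn : 0 < n) (hM : 0 < M) (A : Finset (Fin n)) (tb) (ix) :
    inXShift M (extW hn (Gmap hn hM A tb ix)) := by
  rw [inXShift_iff_admP]
  intro p m hop hcl hone
  set s : ℤ → Letter1 M := extW hn (Gmap hn hM A tb ix) with hsdef
  have hb : ∀ k, isOpenL (s k) = bA hn A k := hbG hn hM A tb ix
  have hPR : PR (bA hn A) p (p + 1 + m) :=
    PR_of_red_one s (bA hn A) hb p m hop hcl hone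
  by_cases hsml : 2 * A.card ≤ n
  · have hbp : bA hn A p = true := by rw [← hb]; exact hop
    have hq : p + 1 + m = frA hn A p :=
      PR.unique_right _ hPR (frA_spec hn A p hsml hbp)
    have hjA : toFinZ n hn p ∈ A := by
      have : bA hn A p = decide (toFinZ n hn p ∈ A) := rfl
      rw [this] at hbp; simpa using hbp
    have hb0 : bA hn A ((toFinZ n hn p : ℤ)) = true := by
      rw [bA_coe]; simpa using hjA
    -- the close partner of the representative
    have hclX : toFinZ n hn (frA hn A ((toFinZ n hn p : ℤ))) ∉ A := by
      have hPR0 := frA_spec hn A _ hsml hb0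
      have hcl0 := PR.close_right _ hPR0
      rw [bA] at hcl0
      simpa using hcl0
    have hXeq : toFinZ n hn (p + 1 + m) = toFinZ n hn (frA hn A ((toFinZ n hn p : ℤ))) := by
      rw [hq]; exact frA_mod hn A hsml p hbp
    have e1 : typL (s p) = tb ⟨toFinZ n hn (frA hn A ((toFinZ n hn p : ℤ))),
        iff_of_false hclX (by omega)⟩ := by
      rw [hsdef, extW, Gmap, dif_pos hjA, dif_pos hsml, typL_mkOpen]
    have e2 : typL (s (p + 1 + m)) = tb ⟨toFinZ n hn (frA hn A ((toFinZ n hn p : ℤ))),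
        iff_of_false hclX (by omega)⟩ := by
      rw [hsdef, extW, hXeq, Gmap, dif_neg hclX, typL_mkClose, dif_pos hsml]
    rw [e1, e2]
  · have hsbig : n < 2 * A.card := by omega
    have hbq : bA hn A (p + 1 + m) = false := by rw [← hb]; exact hcl
    have hp' : p = brA hn A (p + 1 + m) :=
      PR.unique_left _ hPR (brA_spec hn A (p + 1 + m) hsbig hbq)
    have hjC : toFinZ n hn (p + 1 + m) ∉ A := by
      have : bA hn A (p + 1 + m) = decide (toFinZ n hn (p + 1 + m) ∈ A) := rfl
      rw [this] at hbq; simpa using hbq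
    have hb0 : bA hn A ((toFinZ n hn (p + 1 + m) : ℤ)) = false := by
      rw [bA_coe]; simpa using hjC
    have hopX : toFinZ n hn (brA hn A ((toFinZ n hn (p + 1 + m) : ℤ))) ∈ A := by
      have hPR0 := brA_spec hn A _ hsbig hb0
      have hop0 := PR.open_left _ hPR0
      rw [bA] at hop0
      simpa using hop0
    have hXeq : toFinZ n hn p = toFinZ n hn (brA hn A ((toFinZ n hn (p + 1 + m) : ℤ))) := by
      conv_lhs => rw [hp']
      exact brA_mod hn A hsbig (p + 1 + m) hbq
    have e1 : typL (s p) = tb ⟨toFinZ n hn (brA hn A ((toFinZ n hn (p + 1 + m) : ℤ))),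
        iff_of_true hopX (by omega)⟩ := by
      rw [hsdef, extW, hXeq, Gmap, dif_pos hopX, dif_neg hsml, typL_mkOpen]
    have e2 : typL (s (p + 1 + m)) = tb ⟨toFinZ n hn (brA hn A ((toFinZ n hn (p + 1 + m) : ℤ))),
        iff_of_true hopX (by omega)⟩ := by
      rw [hsdef, extW, Gmap, dif_neg hjC, typL_mkClose, dif_neg hsml]
    rw [e1, e2]

end Bijection

/-! ### Forcing and the block bijection -/

section Bijection2

variable {n : ℕ}

lemma forced_small (hn : 0 < n) {A : Finset (Fin n)} {w : Fin n → Letter1 M}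
    (hadm : inXShift M (extW hn w)) (hpatt : pattF w = A) (hs : 2 * A.card ≤ n)
    (j : Fin n) (hj : j ∈ A) :
    typL (w j) = typL (w (toFinZ n hn (frA hn A (j : ℤ)))) := by
  set s : ℤ → Letter1 M := extW hn w with hsdef
  have hb : ∀ k, isOpenL (s k) = bA hn A k := hbW hn hpatt
  have hbp : bA hn A (j : ℤ) = true := by rw [bA_coe]; simpa using hj
  have hPR := frA_spec hn A (j : ℤ) hs hbp
  obtain ⟨h1, h2, h3⟩ := hPR
  set q := frA hn A (j : ℤ) with hqdef
  have hm : q = (j : ℤ) + 1 + (q - j - 1).toNat := by omega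
  have hcl : isOpenL (s q) = false := by
    rw [hb]; exact PR.close_right _ ⟨h1, h2, h3⟩
  have hop : isOpenL (s (j : ℤ)) = true := by rw [hb]; exact hbp
  have hone : red1 M (factorW s ((j : ℤ) + 1) (q - j - 1).toNat) = one1 M := by
    apply red_one_of_PR s (bA hn A) hb (j : ℤ) (q - j - 1).toNat
    · rw [← hm]; exact hcl
    · rw [← hm]; exact ⟨h1, h2, h3⟩
    · exact hadm ((j : ℤ) + 1) _
  have htyp := (inXShift_iff_admP s).mp hadm (j : ℤ) (q - j - 1).toNat hop
    (by rw [← hm]; exact hcl) hone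
  rw [← hm] at htyp
  have e1 : s (j : ℤ) = w j := extW_coe hn w j
  have e2 : s q = w (toFinZ n hn q) := rfl
  rw [e1, e2] at htyp
  exact htyp

lemma forced_big (hn : 0 < n) {A : Finset (Fin n)} {w : Fin n → Letter1 M}
    (hadm : inXShift M (extW hn w)) (hpatt : pattF w = A) (hs : n < 2 * A.card)
    (j : Fin n) (hj : j ∉ A) :
    typL (w j) = typL (w (toFinZ n hn (brA hn A (j : ℤ)))) := by
  set s : ℤ → Letter1 M := extW hn w with hsdef
  have hb : ∀ k, isOpenL (s k) = bA hn A k := hbW hn hpatt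
  have hbq : bA hn A (j : ℤ) = false := by rw [bA_coe]; simpa using hj
  have hPR := brA_spec hn A (j : ℤ) hs hbq
  obtain ⟨h1, h2, h3⟩ := hPR
  set p := brA hn A (j : ℤ) with hpdef
  have hm : (j : ℤ) = p + 1 + ((j : ℤ) - p - 1).toNat := by omega
  have hcl : isOpenL (s (j : ℤ)) = false := by rw [hb]; exact hbq
  have hop : isOpenL (s p) = true := by
    rw [hb]; exact PR.open_left _ ⟨h1, h2, h3⟩
  have hone : red1 M (factorW s (p + 1) ((j : ℤ) - p - 1).toNat) = one1 M := by
    apply red_one_of_PR s (bA hn A) hb p ((j : ℤ) - p - 1).toNat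
    · rw [← hm]; exact hcl
    · rw [← hm]; exact ⟨h1, h2, h3⟩
    · exact hadm (p + 1) _
  have htyp := (inXShift_iff_admP s).mp hadm p ((j : ℤ) - p - 1).toNat hop
    (by rw [← hm]; exact hcl) hone
  rw [← hm] at htyp
  have e1 : s p = w (toFinZ n hn p) := rfl
  have e2 : s (j : ℤ) = w j := extW_coe hn w j
  rw [e1, e2] at htyp
  exact htyp.symm

noncomputable def blockEquiv (hn : 0 < n) (hM : 0 < M) (A : Finset (Fin n)) :
    {w : Fin n → Letter1 M // inXShift M (extW hn w) ∧ pattF w = A} ≃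
      (({j : Fin n // j ∈ A ↔ n < 2 * A.card} → Bool) × ({j : Fin n // j ∉ A} → Fin M)) where
  toFun w := (fun j => typL (w.1 j.1), fun j => idxC hM (w.1 j.1))
  invFun d := ⟨Gmap hn hM A d.1 d.2, adm_Gmap hn hM A d.1 d.2, pattF_Gmap hn hM A d.1 d.2⟩
  left_inv := by
    rintro ⟨w, hadm, hpatt⟩
    apply Subtype.ext
    simp only
    funext j
    by_cases hj : j ∈ A
    · have hwj : isOpenL (w j) = true := by
        rw [← mem_pattF, hpatt]; exact hj
      rw [Gmap, dif_pos hj]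
      by_cases hs : 2 * A.card ≤ n
      · rw [dif_pos hs]
        simp only
        rw [← forced_small hn hadm hpatt hs j hj, mkOpen_typL _ hwj]
      · rw [dif_neg hs]
        simp only
        rw [mkOpen_typL _ hwj]
    · have hwj : isOpenL (w j) = false := by
        have h2 := mem_pattF w j
        rw [hpatt] at h2
        simpa [h2] using hj
      rw [Gmap, dif_neg hj]
      by_cases hs : 2 * A.card ≤ n
      · rw [dif_pos hs]
        simp only
        rw [mkClose_typL hM _ hwj]
      · rw [dif_neg hs]
        simp only
        rw [← forced_big hn hadm hpatt (by omega) j hj, mkClose_typL hM _ hwj]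
  right_inv := by
    rintro ⟨tb, ix⟩
    simp only
    refine Prod.ext ?_ ?_
    · funext jb
      obtain ⟨j, hjb⟩ := jb
      simp only
      by_cases hs : 2 * A.card ≤ n
      · have hj : j ∉ A := by
          rw [hjb]; omega
        rw [Gmap, dif_neg hj, typL_mkClose, dif_pos hs]
      · have hj : j ∈ A := by
          rw [hjb]; omega
        rw [Gmap, dif_pos hj, dif_neg hs, typL_mkOpen]
    · funext jc
      obtain ⟨j, hj⟩ := jc
      simp only
      rw [Gmap, dif_neg hj, idxC_mkClose]

end Bijection2

/-! ### Counting -/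

section Counting

variable {n : ℕ}

lemma nat_card_sigma {ι : Type*} [Fintype ι] (f : ι → Type*) [∀ i, Finite (f i)] :
    Nat.card (Σ i, f i) = ∑ i, Nat.card (f i) := by
  classical
  letI : ∀ i, Fintype (f i) := fun i => Fintype.ofFinite _
  simp [Nat.card_eq_fintype_card, Fintype.card_sigma]

lemma card_not_mem (A : Finset (Fin n)) :
    Nat.card {j : Fin n // j ∉ A} = n - A.card := by
  classical
  rw [Nat.card_eq_fintype_card, Fintype.card_subtype_compl, Fintype.card_fin]
  congr 1
  simp

lemma card_carrier (A : Finset (Fin n)) :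
    Nat.card {j : Fin n // j ∈ A ↔ n < 2 * A.card} =
      if 2 * A.card ≤ n then n - A.card else A.card := by
  classical
  by_cases hs : 2 * A.card ≤ n
  · rw [if_pos hs]
    have e : {j : Fin n // j ∈ A ↔ n < 2 * A.card} ≃ {j : Fin n // j ∉ A} :=
      Equiv.subtypeEquivRight (fun j => by
        have hlt : ¬ (n < 2 * A.card) := by omega
        simp [hlt])
    rw [Nat.card_congr e, card_not_mem]
  · rw [if_neg hs]
    have e : {j : Fin n // j ∈ A ↔ n < 2 * A.card} ≃ {j : Fin n // j ∈ A} :=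
      Equiv.subtypeEquivRight (fun j => by
        have hlt : n < 2 * A.card := by omega
        simp [hlt])
    rw [Nat.card_congr e, Nat.card_eq_fintype_card]
    simp

lemma card_blocks (hn : 0 < n) (hM : 0 < M) :
    Nat.card {w : Fin n → Letter1 M // inXShift M (extW hn w)} =
      ∑ A ∈ (Finset.univ : Finset (Fin n)).powerset,
        2 ^ (if 2 * A.card ≤ n then n - A.card else A.card) * M ^ (n - A.card) := by
  classical
  rw [Nat.card_congr
    (Equiv.sigmaFiberEquiv
      (fun w : {w : Fin n → Letter1 M // inXShift M (extW hn w)} => pattF w.1)).symm]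
  rw [nat_card_sigma]
  rw [show (Finset.univ : Finset (Finset (Fin n))) = (Finset.univ : Finset (Fin n)).powerset
    from (Finset.powerset_univ).symm]
  apply Finset.sum_congr rfl
  intro A _
  have e2 : {w' : {w : Fin n → Letter1 M // inXShift M (extW hn w)} // pattF w'.1 = A} ≃
      {w : Fin n → Letter1 M // inXShift M (extW hn w) ∧ pattF w = A} :=
    Equiv.subtypeSubtypeEquivSubtypeInter
      (fun w : Fin n → Letter1 M => inXShift M (extW hn w)) (fun w => pattF w = A)
  rw [Nat.card_congr (e2.trans (blockEquiv hn hM A)), Nat.card_prod, Nat.card_fun,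
    Nat.card_fun, card_carrier, card_not_mem]
  simp [Nat.card_eq_fintype_card]

lemma pX_formula (hn : 0 < n) (hM : 0 < M) :
    pX M n = ∑ j ∈ Finset.range (n + 1),
      n.choose j * (2 ^ (if 2 * j ≤ n then n - j else j) * M ^ (n - j)) := by
  rw [pX_eq_card_blocks hn, card_blocks hn hM]
  rw [Finset.sum_powerset_apply_card
    (f := fun k => 2 ^ (if 2 * k ≤ n then n - k else k) * M ^ (n - k))]
  simp [Finset.card_univ, smul_eq_mul]

end Counting

/-! ### The final formula -/

section Final

variable {n : ℕ}

lemma pX_int (hn : 0 < n) (hM : 0 < M) :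
    (pX M n : ℤ) = ∑ j ∈ Finset.range (n + 1), (n.choose j : ℤ) *
      (if 2 * j ≤ n then 2 ^ (n - j) * (M:ℤ) ^ (n - j) else 2 ^ j * (M:ℤ) ^ (n - j)) := by
  rw [pX_formula hn hM]
  push_cast
  apply Finset.sum_congr rfl
  intro j _
  by_cases h : 2 * j ≤ n <;> simp [h] <;> push_cast <;> ring

lemma pX_split (hn : 0 < n) (hM : 0 < M) :
    (pX M n : ℤ) =
      (∑ j ∈ Finset.range (n + 1),
        (if n ≤ 2 * j then (n.choose j : ℤ) * (2 * (M:ℤ)) ^ j else 0)) +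
      (∑ j ∈ Finset.range (n + 1),
        (if ¬ (2 * j ≤ n) then (n.choose j : ℤ) * 2 ^ j * (M:ℤ) ^ (n - j) else 0)) := by
  rw [pX_int hn hM]
  have step1 : ∀ j ∈ Finset.range (n + 1), (n.choose j : ℤ) *
      (if 2 * j ≤ n then 2 ^ (n - j) * (M:ℤ) ^ (n - j) else 2 ^ j * (M:ℤ) ^ (n - j)) =
      (if 2 * j ≤ n then (n.choose j : ℤ) * (2 * (M:ℤ)) ^ (n - j) else 0) +
      (if ¬ (2 * j ≤ n) then (n.choose j : ℤ) * 2 ^ j * (M:ℤ) ^ (n - j) else 0) := by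
    intro j _
    by_cases h : 2 * j ≤ n <;> simp [h, mul_pow] <;> ring
  rw [Finset.sum_congr rfl step1, Finset.sum_add_distrib]
  congr 1
  rw [← Finset.sum_range_reflect
    (fun j => if 2 * j ≤ n then (n.choose j : ℤ) * (2 * (M:ℤ)) ^ (n - j) else 0) (n + 1)]
  apply Finset.sum_congr rfl
  intro j hj
  have hjn : j ≤ n := by simp at hj; omega
  simp only [Nat.add_sub_cancel]
  by_cases h : n ≤ 2 * j
  · rw [if_pos (by omega : 2 * (n - j) ≤ n), if_pos h, Nat.choose_symm hjn,
      show n - (n - j) = j by omega]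
  · rw [if_neg (by omega), if_neg h]

lemma sum_ite_compl (c : ℕ → Prop) [DecidablePred c] (t : ℕ → ℤ) (m : ℕ) :
    (∑ j ∈ Finset.range m, (if c j then t j else 0)) =
      (∑ j ∈ Finset.range m, t j) - (∑ j ∈ Finset.range m, (if ¬ c j then t j else 0)) := by
  have : ∀ j ∈ Finset.range m, t j = (if c j then t j else 0) + (if ¬ c j then t j else 0) := by
    intro j _
    by_cases h : c j <;> simp [h]
  rw [Finset.sum_congr rfl this, Finset.sum_add_distrib]
  ring

lemma binom1 : (∑ j ∈ Finset.range (n + 1), (n.choose j : ℤ) * (2 * (M:ℤ)) ^ j) =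
    (2 * (M:ℤ) + 1) ^ n := by
  rw [add_pow]
  apply Finset.sum_congr rfl
  intro j _
  ring

lemma binom2 : (∑ j ∈ Finset.range (n + 1), (n.choose j : ℤ) * 2 ^ j * (M:ℤ) ^ (n - j)) =
    ((M:ℤ) + 2) ^ n := by
  rw [show (M:ℤ) + 2 = 2 + (M:ℤ) by ring, add_pow]
  apply Finset.sum_congr rfl
  intro j _
  ring

lemma filter1 (hn : 0 < n) : (Finset.range (n + 1)).filter (fun j => ¬ n ≤ 2 * j) =
    Finset.range ((n + 1) / 2) := by
  ext j
  simp only [Finset.mem_filter, Finset.mem_range, not_le]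
  omega

lemma filter2 (hn : 0 < n) : (Finset.range (n + 1)).filter (fun j => 2 * j ≤ n) =
    Finset.range (n / 2 + 1) := by
  ext j
  simp only [Finset.mem_filter, Finset.mem_range]
  omega

lemma pX_final (hn : 0 < n) (hM : 0 < M) :
    (pX M n : ℤ) = (2 * (M:ℤ) + 1) ^ n + ((M:ℤ) + 2) ^ n
      - (∑ j ∈ Finset.range ((n + 1) / 2), (n.choose j : ℤ) * (2 * (M:ℤ)) ^ j)
      - (∑ j ∈ Finset.range (n / 2 + 1), (n.choose j : ℤ) * 2 ^ j * (M:ℤ) ^ (n - j)) := by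
  rw [pX_split hn hM]
  rw [sum_ite_compl (fun j => n ≤ 2 * j) (fun j => (n.choose j : ℤ) * (2 * (M:ℤ)) ^ j)]
  rw [show (∑ j ∈ Finset.range (n + 1),
      (if ¬ n ≤ 2 * j then (n.choose j : ℤ) * (2 * (M:ℤ)) ^ j else 0)) =
      ∑ j ∈ Finset.range ((n + 1) / 2), (n.choose j : ℤ) * (2 * (M:ℤ)) ^ j by
    rw [← filter1 hn, Finset.sum_filter]]
  rw [show (∑ j ∈ Finset.range (n + 1),
      (if ¬ 2 * j ≤ n then (n.choose j : ℤ) * 2 ^ j * (M:ℤ) ^ (n - j) else 0)) =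
      (∑ j ∈ Finset.range (n + 1), (n.choose j : ℤ) * 2 ^ j * (M:ℤ) ^ (n - j)) -
      (∑ j ∈ Finset.range (n / 2 + 1), (n.choose j : ℤ) * 2 ^ j * (M:ℤ) ^ (n - j)) by
    rw [show (∑ j ∈ Finset.range (n + 1),
        (if ¬ 2 * j ≤ n then (n.choose j : ℤ) * 2 ^ j * (M:ℤ) ^ (n - j) else 0)) =
        (∑ j ∈ Finset.range (n + 1), (n.choose j : ℤ) * 2 ^ j * (M:ℤ) ^ (n - j)) -
        (∑ j ∈ Finset.range (n + 1),
          (if 2 * j ≤ n then (n.choose j : ℤ) * 2 ^ j * (M:ℤ) ^ (n - j) else 0)) from by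
      rw [sum_ite_compl (fun j => ¬ 2 * j ≤ n)]
      try simp only [not_not]
      try ring]
    congr 1
    rw [← filter2 hn, Finset.sum_filter]]
  rw [binom1, binom2]
  ring

end Final

end XShift

open XShift in
/-- The number of `n`-periodic points of `X(M)`:
for even `n`, `p_n = (2M+1)ⁿ + (M+2)ⁿ − ∑_{i=0}^{n/2} C(n,i)2ⁱ(Mⁱ + M^{n−i}) + C(n,n/2)(2M)^{n/2}`;
for odd `n`, `p_n = (2M+1)ⁿ + (M+2)ⁿ − ∑_{i=0}^{(n−1)/2} C(n,i)2ⁱ(Mⁱ + M^{n−i})`. -/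
theorem xshift_periodic_point_count (M n : ℕ) (hM : 1 ≤ M) (hn : 1 ≤ n) :
    (Even n →
      (pX M n : ℤ) =
        (2 * (M : ℤ) + 1) ^ n + ((M : ℤ) + 2) ^ n
          - ∑ i ∈ Finset.range (n / 2 + 1),
              (n.choose i : ℤ) * 2 ^ i * ((M : ℤ) ^ i + (M : ℤ) ^ (n - i))
          + (n.choose (n / 2) : ℤ) * (2 * (M : ℤ)) ^ (n / 2)) ∧
    (Odd n →
      (pX M n : ℤ) =
        (2 * (M : ℤ) + 1) ^ n + ((M : ℤ) + 2) ^ n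
          - ∑ i ∈ Finset.range ((n - 1) / 2 + 1),
              (n.choose i : ℤ) * 2 ^ i * ((M : ℤ) ^ i + (M : ℤ) ^ (n - i))) := by
  have hsplit : ∀ ν : ℕ,
      (∑ i ∈ Finset.range ν, (n.choose i : ℤ) * 2 ^ i * ((M : ℤ) ^ i + (M : ℤ) ^ (n - i))) =
      (∑ i ∈ Finset.range ν, (n.choose i : ℤ) * (2 * (M : ℤ)) ^ i) +
      (∑ i ∈ Finset.range ν, (n.choose i : ℤ) * 2 ^ i * (M : ℤ) ^ (n - i)) := by
    intro ν
    rw [← Finset.sum_add_distrib]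
    apply Finset.sum_congr rfl
    intro i _
    rw [mul_pow]
    ring
  constructor
  · intro hev
    rw [pX_final hn hM]
    have h1 : (n + 1) / 2 = n / 2 := by
      obtain ⟨k, hk⟩ := hev; omega
    rw [h1, hsplit]
    rw [Finset.sum_range_succ (fun i => (n.choose i : ℤ) * (2 * (M : ℤ)) ^ i) (n / 2)]
    ring
  · intro hodd
    rw [pX_final hn hM]
    have h1 : (n + 1) / 2 = (n - 1) / 2 + 1 := by
      obtain ⟨k, hk⟩ := hodd; omega
    have h2 : n / 2 = (n - 1) / 2 := by
      obtain ⟨k, hk⟩ := hodd; omega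
    rw [h1, h2, hsplit]
    ring
end

section
/- In ℚ[[z]], with s = √((1−Nz)^2 − 4Mz^2) (constant term 1) and f = (1/2)(1 − Nz − s), the identity (1 − Nz − f) / ({1 − (M+N)z − f}·{1 − (N+1)z − f}) = 1/(1 − (1+M+N)z) holds. -/
open PowerSeries

/-- In `ℚ[[z]]`, with `s = √((1−Nz)² − 4Mz²)` (constant term `1`) and
`f = (1/2)(1 − Nz − s)`, one has
`(1 − Nz − f)/({1 − (M+N)z − f}·{1 − (N+1)z − f}) = 1/(1 − (1+M+N)z)`. -/
theorem motzkin_key_identity (M N : ℕ) (hM : 1 ≤ M) (hN : 1 ≤ N)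
    (s : PowerSeries ℚ) (hs0 : PowerSeries.constantCoeff s = 1)
    (hs : s ^ 2 = (1 - (N : PowerSeries ℚ) * PowerSeries.X) ^ 2
      - 4 * (M : PowerSeries ℚ) * PowerSeries.X ^ 2) :
    (1 - (N : PowerSeries ℚ) * PowerSeries.X
        - PowerSeries.C (1 / 2 : ℚ) * (1 - (N : PowerSeries ℚ) * PowerSeries.X - s))
      * (((1 - ((M + N : ℕ) : PowerSeries ℚ) * PowerSeries.X
            - PowerSeries.C (1 / 2 : ℚ) * (1 - (N : PowerSeries ℚ) * PowerSeries.X - s))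
          * (1 - ((N + 1 : ℕ) : PowerSeries ℚ) * PowerSeries.X
            - PowerSeries.C (1 / 2 : ℚ) * (1 - (N : PowerSeries ℚ) * PowerSeries.X - s)))⁻¹)
      = (1 - ((1 + M + N : ℕ) : PowerSeries ℚ) * PowerSeries.X)⁻¹ := by
  have h2 : (PowerSeries.C (1/2 : ℚ)) * 2 = (1 : PowerSeries ℚ) := by
    have h : (2 : PowerSeries ℚ) = PowerSeries.C (2 : ℚ) := (map_ofNat (PowerSeries.C (R := ℚ)) 2).symm
    rw [h, ← map_mul]; norm_num
  have hu : (PowerSeries.C (1/2 : ℚ) * (1 - (N : PowerSeries ℚ) * X - s)) ^ 2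
      = (PowerSeries.C (1/2 : ℚ) * (1 - (N : PowerSeries ℚ) * X - s))
          * (1 - (N : PowerSeries ℚ) * X) - (M : PowerSeries ℚ) * X ^ 2 := by
    linear_combination (PowerSeries.C (1/2 : ℚ)) ^ 2 * hs
      + (PowerSeries.C (1/2 : ℚ) * (1 - (N : PowerSeries ℚ) * X)
            * (1 - (N : PowerSeries ℚ) * X - s)
          - (M : PowerSeries ℚ) * X ^ 2 * (2 * PowerSeries.C (1/2 : ℚ) + 1)) * h2
  set A : PowerSeries ℚ := 1 - (N : PowerSeries ℚ) * X
      - PowerSeries.C (1 / 2 : ℚ) * (1 - (N : PowerSeries ℚ) * X - s) with hA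
  set B : PowerSeries ℚ := (1 - ((M + N : ℕ) : PowerSeries ℚ) * X
      - PowerSeries.C (1 / 2 : ℚ) * (1 - (N : PowerSeries ℚ) * X - s))
      * (1 - ((N + 1 : ℕ) : PowerSeries ℚ) * X
      - PowerSeries.C (1 / 2 : ℚ) * (1 - (N : PowerSeries ℚ) * X - s)) with hB
  set Cd : PowerSeries ℚ := 1 - ((1 + M + N : ℕ) : PowerSeries ℚ) * X with hCd
  have hBc : PowerSeries.constantCoeff B ≠ 0 := by
    rw [hB]; simp [hs0]
  have hCc : PowerSeries.constantCoeff Cd ≠ 0 := by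
    rw [hCd]; simp
  have key : A * Cd = B := by
    rw [hA, hB, hCd]
    push_cast
    linear_combination -hu
  have hB1 : B * B⁻¹ = 1 := PowerSeries.mul_inv_cancel _ hBc
  have hC1 : Cd * Cd⁻¹ = 1 := PowerSeries.mul_inv_cancel _ hCc
  linear_combination B⁻¹ * Cd⁻¹ * key - A * B⁻¹ * hC1 + Cd⁻¹ * hB1
end
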